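/- arXiv:2302.02191 — 2 statements merged into one kernel-verified Lean document; each statement's English description precedes it below -/
import Mathlib

section
/- For i = 1, 2, let Yi = Hi Xiᵀ with Hi ∈ ℂ^{Nr×L} full column rank and Xi ∈ ℂ^{N̄×L} full column rank, sharing exactly one common column x_c (the remaining columns of X1 and X2, together with x_c, form a linearly independent set of 2L−1 vectors in ℂ^{N̄}). Then the intersection of the row spaces of Y1 and Y2 (i.e., column spaces of Y1ᵀ and Y2ᵀ) is exactly span{x_c}, and in particular is one-dimensional. -/
open Matrix

lemma range_factor_aux {Nr L Nb : ℕ}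
    (H : Matrix (Fin Nr) (Fin L) ℂ) (X : Matrix (Fin Nb) (Fin L) ℂ)
    (hH : LinearIndependent ℂ Hᵀ) :
    LinearMap.range ((H * Xᵀ)ᵀ).mulVecLin = Submodule.span ℂ (Set.range Xᵀ) := by
  have h1 : (H * Xᵀ)ᵀ = X * Hᵀ := by rw [transpose_mul, transpose_transpose]
  have hsurj : LinearMap.range (Hᵀ).mulVecLin = ⊤ := by
    apply Submodule.eq_top_of_finrank_eq
    have h2 : Module.finrank ℂ (LinearMap.range (Hᵀ).mulVecLin) = Hᵀ.rank := rfl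
    rw [h2, Matrix.rank_transpose, Matrix.rank, Matrix.range_mulVecLin, Matrix.col,
      finrank_span_eq_card hH, Module.finrank_fin_fun]
    exact Fintype.card_fin L
  rw [h1, mulVecLin_mul, LinearMap.range_comp, hsurj, Submodule.map_top,
    Matrix.range_mulVecLin, Matrix.col]

lemma span_inf_aux {L Nb : ℕ} [NeZero L]
    (X1 X2 : Matrix (Fin Nb) (Fin L) ℂ) (xc : Fin Nb → ℂ)
    (hc1 : (fun i => X1 i 0) = xc) (hc2 : (fun i => X2 i 0) = xc)
    (hli : LinearIndependent ℂ
      (Sum.elim X1ᵀ (fun j : {j : Fin L // j ≠ 0} => X2ᵀ j.1))) :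
    Submodule.span ℂ (Set.range X1ᵀ) ⊓ Submodule.span ℂ (Set.range X2ᵀ)
      = Submodule.span ℂ {xc} := by
  have hx1 : X1ᵀ 0 = xc := hc1
  have hx2 : X2ᵀ 0 = xc := hc2
  apply le_antisymm
  · rintro v hv
    rw [Submodule.mem_inf] at hv
    obtain ⟨hv1, hv2⟩ := hv
    replace hv1 := (Submodule.mem_span_range_iff_exists_fun ℂ).mp hv1
    replace hv2 := (Submodule.mem_span_range_iff_exists_fun ℂ).mp hv2
    obtain ⟨a, ha⟩ := hv1
    obtain ⟨b, hb⟩ := hv2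
    have hsplit : (∑ j : Fin L, b j • X2ᵀ j)
        = b 0 • X2ᵀ 0 + ∑ j : {j : Fin L // j ≠ 0}, b j.1 • X2ᵀ j.1 := by
      rw [← Finset.sum_subtype (Finset.univ.erase 0)
          (fun x => by simp [Finset.mem_erase]) (fun j => b j • X2ᵀ j),
        Finset.add_sum_erase Finset.univ (fun j => b j • X2ᵀ j) (Finset.mem_univ (0 : Fin L))]
    set c : (Fin L) ⊕ {j : Fin L // j ≠ 0} → ℂ :=
      Sum.elim (fun j => a j - if j = 0 then b 0 else 0) (fun j => -b j.1) with hc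
    have hsum : ∑ s, c s • (Sum.elim X1ᵀ
        (fun j : {j : Fin L // j ≠ 0} => X2ᵀ j.1)) s = 0 := by
      rw [Fintype.sum_sum_type]
      simp only [hc, Sum.elim_inl, Sum.elim_inr]
      have h1 : ∑ j : Fin L, (a j - if j = 0 then b 0 else 0) • X1ᵀ j
          = v - b 0 • xc := by
        simp only [sub_smul, ite_smul, zero_smul]
        rw [Finset.sum_sub_distrib, ha,
          Finset.sum_ite_eq' Finset.univ (0 : Fin L) (fun j => b 0 • X1ᵀ j)]
        simp [hx1]
      have h2 : ∑ j : {j : Fin L // j ≠ 0}, (-b j.1) • X2ᵀ j.1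
          = -(v - b 0 • xc) := by
        simp only [neg_smul]
        have h3 : (∑ j : {j : Fin L // j ≠ 0}, b j.1 • X2ᵀ j.1)
            = v - b 0 • xc := by
          rw [hb, hx2] at hsplit
          rw [eq_sub_iff_add_eq, add_comm, ← hsplit]
        rw [Finset.sum_neg_distrib, h3]
      exact (congrArg₂ (· + ·) h1 h2).trans (add_neg_cancel _)
    have hzero := Fintype.linearIndependent_iff.mp hli c hsum
    have hbz : ∀ j : Fin L, j ≠ 0 → b j = 0 := by
      intro j hj
      have := hzero (Sum.inr ⟨j, hj⟩)
      simpa [hc] using this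
    have hveq : v = b 0 • xc := by
      rw [← hb, hsplit, hx2,
        Finset.sum_eq_zero (fun j _ => by rw [hbz j.1 j.2, zero_smul]), add_zero]
    rw [hveq]
    exact Submodule.smul_mem _ _ (Submodule.mem_span_singleton_self xc)
  · rw [Submodule.span_le, Set.singleton_subset_iff]
    exact Submodule.mem_inf.mpr
      ⟨Submodule.subset_span ⟨0, hx1⟩, Submodule.subset_span ⟨0, hx2⟩⟩

/-- Two-view model `Yi = Hi Xiᵀ`: if `H1, H2` are full column rank, `X1, X2` share
exactly one common column `x_c ≠ 0` (their first columns), and the `2L−1` distinct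
columns (`x_c` together with the remaining columns of `X1` and of `X2`) are linearly
independent, then the intersection of the row spaces of `Y1` and `Y2` is exactly
`span{x_c}`, and in particular is one-dimensional. -/
theorem rowspace_intersection_is_common_signal {Nr L Nb : ℕ} [NeZero L]
    (H1 H2 : Matrix (Fin Nr) (Fin L) ℂ)
    (X1 X2 : Matrix (Fin Nb) (Fin L) ℂ)
    (xc : Fin Nb → ℂ) (hxc : xc ≠ 0)
    (hc1 : (fun i => X1 i 0) = xc) (hc2 : (fun i => X2 i 0) = xc)
    (hH1 : LinearIndependent ℂ H1ᵀ) (hH2 : LinearIndependent ℂ H2ᵀ)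
    (hX1 : LinearIndependent ℂ X1ᵀ) (hX2 : LinearIndependent ℂ X2ᵀ)
    (hli : LinearIndependent ℂ
      (Sum.elim X1ᵀ (fun j : {j : Fin L // j ≠ 0} => X2ᵀ j.1))) :
    LinearMap.range ((H1 * X1ᵀ)ᵀ).mulVecLin ⊓
        LinearMap.range ((H2 * X2ᵀ)ᵀ).mulVecLin =
      Submodule.span ℂ {xc} ∧
    Module.finrank ℂ
      ↥(LinearMap.range ((H1 * X1ᵀ)ᵀ).mulVecLin ⊓
          LinearMap.range ((H2 * X2ᵀ)ᵀ).mulVecLin) = 1 := by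
  have key : LinearMap.range ((H1 * X1ᵀ)ᵀ).mulVecLin ⊓
      LinearMap.range ((H2 * X2ᵀ)ᵀ).mulVecLin = Submodule.span ℂ {xc} := by
    rw [range_factor_aux H1 X1 hH1, range_factor_aux H2 X2 hH2]
    exact span_inf_aux X1 X2 xc hc1 hc2 hli
  exact ⟨key, by rw [key]; exact finrank_span_singleton hxc⟩
end

section
/- Suppose in the noiseless two-view model Yi = Hi Xiᵀ (i = 1,2) the matrices X1 and X2 share exactly one common column x_c, with the combined set of all 2L−1 distinct columns linearly independent, and H1, H2 full column rank. Then for any unit-norm maximizer g* of gᴴ(P1+P2)g (Pi the projector onto range(Yiᵀ)), there exist combiners q1*, q2* ∈ ℂ^{Nr} achieving zero MAXVAR objective: Y1ᵀq1* = Y2ᵀq2* = g*, and Yiᵀqi* is proportional to x_c; i.e., applying the optimal combiner to the received view exactly equalizes the desired layer's repeated signal. -/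
open Matrix

/-- Squared Euclidean norm of a complex vector. -/
noncomputable def sqNorm {n : ℕ} (v : Fin n → ℂ) : ℝ := ∑ i, ‖v i‖ ^ 2

lemma sqNorm_eq_re {n : ℕ} (v : Fin n → ℂ) : (star v ⬝ᵥ v).re = sqNorm v := by
  simp [sqNorm, dotProduct, Complex.re_sum, ← Complex.normSq_eq_norm_sq, Complex.normSq_apply,
    Complex.mul_re]

lemma sqNorm_nonneg' {n : ℕ} (v : Fin n → ℂ) : 0 ≤ sqNorm v :=
  Finset.sum_nonneg fun i _ => by positivity

lemma sqNorm_eq_zero' {n : ℕ} {v : Fin n → ℂ} (h : sqNorm v = 0) : v = 0 := by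
  funext i
  have := (Finset.sum_eq_zero_iff_of_nonneg (fun i _ => by positivity)).mp h i (Finset.mem_univ i)
  simpa using this

lemma sqNorm_smul' {n : ℕ} (c : ℂ) (v : Fin n → ℂ) : sqNorm (c • v) = ‖c‖^2 * sqNorm v := by
  simp [sqNorm, Finset.mul_sum, mul_pow, norm_mul]

section
variable {n : ℕ} {P : Matrix (Fin n) (Fin n) ℂ} (hherm : Pᴴ = P) (hidem : P * P = P)
  (g : Fin n → ℂ)

include hherm in
lemma star_proj : star (P.mulVec g) = star g ᵥ* P := by
  rw [star_mulVec, hherm]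

include hherm hidem in
lemma dot_proj : star g ⬝ᵥ P.mulVec g = star (P.mulVec g) ⬝ᵥ (P.mulVec g) := by
  conv_lhs => rw [← hidem, ← mulVec_mulVec, dotProduct_mulVec, ← star_proj hherm]

include hherm hidem in
lemma sqNorm_sub_proj : sqNorm (g - P.mulVec g) = sqNorm g - (star g ⬝ᵥ P.mulVec g).re := by
  have key : star (g - P.mulVec g) ⬝ᵥ (g - P.mulVec g)
      = star g ⬝ᵥ g - (star g ⬝ᵥ P.mulVec g) - (star (P.mulVec g) ⬝ᵥ g) +
        star g ⬝ᵥ P.mulVec g := by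
    rw [star_sub, sub_dotProduct, dotProduct_sub, dotProduct_sub, ← dot_proj hherm hidem]
    ring
  have hre : (star (P.mulVec g) ⬝ᵥ g).re = (star g ⬝ᵥ P.mulVec g).re := by
    rw [star_dotProduct]; simp
  have h2 := congrArg Complex.re key
  rw [← sqNorm_eq_re (g - P.mulVec g), h2]
  simp only [Complex.sub_re, Complex.add_re, hre, sqNorm_eq_re]
  ring

include hherm hidem in
lemma proj_re_le (hg : sqNorm g = 1) : (star g ⬝ᵥ P.mulVec g).re ≤ 1 := by
  have h := sqNorm_sub_proj hherm hidem g
  have h2 := sqNorm_nonneg' (g - P.mulVec g)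
  rw [h, hg] at h2; linarith

include hherm hidem in
lemma proj_fix (hg : sqNorm g = 1) (hr : (star g ⬝ᵥ P.mulVec g).re = 1) :
    P.mulVec g = g := by
  have h := sqNorm_sub_proj hherm hidem g
  rw [hg, hr, sub_self] at h
  exact (sub_eq_zero.mp (sqNorm_eq_zero' h)).symm
end

lemma mulVecLin_surjective_of_li' {m n : ℕ} {M : Matrix (Fin m) (Fin n) ℂ}
    (h : LinearIndependent ℂ M) : Function.Surjective M.mulVecLin := by
  rw [← LinearMap.range_eq_top]
  apply Submodule.eq_top_of_finrank_eq
  have h1 : M.rank = m := h.rank_matrix.trans (by simp)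
  simpa [Matrix.rank] using h1

lemma range_view {Nr L Nb : ℕ} (H : Matrix (Fin Nr) (Fin L) ℂ) (X : Matrix (Fin Nb) (Fin L) ℂ)
    (hH : LinearIndependent ℂ Hᵀ) :
    LinearMap.range ((H * Xᵀ)ᵀ).mulVecLin = LinearMap.range X.mulVecLin := by
  rw [transpose_mul, transpose_transpose, mulVecLin_mul]
  exact LinearMap.range_comp_of_range_eq_top _
    (LinearMap.range_eq_top.mpr (mulVecLin_surjective_of_li' hH))

lemma mulVec_sum' {m n : ℕ} (M : Matrix (Fin m) (Fin n) ℂ) (v : Fin n → ℂ) :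
    M.mulVec v = ∑ j, v j • Mᵀ j := by
  ext i
  simp [mulVec, dotProduct, Finset.sum_apply, mul_comm]

lemma fix_of_mem_range {n : ℕ} {P : Matrix (Fin n) (Fin n) ℂ} (hidem : P * P = P)
    {v : Fin n → ℂ} (hv : v ∈ LinearMap.range P.mulVecLin) : P.mulVec v = v := by
  obtain ⟨y, hy⟩ := hv
  rw [mulVecLin_apply] at hy
  rw [← hy, mulVec_mulVec, hidem]

/-- In the noiseless two-view model `Yi = Hi Xiᵀ` with `Hi` full column rank and
`X1, X2` sharing exactly one common column `x_c` (all `2L−1` distinct columns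
linearly independent), every unit-norm maximizer `g⋆` of `gᴴ(P1+P2)g` — with `Pi`
the orthogonal projector onto `range(Yiᵀ)` — admits combiners `q1⋆, q2⋆` achieving
zero MAXVAR objective, `Y1ᵀq1⋆ = Y2ᵀq2⋆ = g⋆`, and the equalized signal `Yiᵀqi⋆`
is proportional to `x_c`. -/
theorem maxvar_optimal_combiners_equalize {Nr L Nb : ℕ} [NeZero L]
    (H1 H2 : Matrix (Fin Nr) (Fin L) ℂ)
    (X1 X2 : Matrix (Fin Nb) (Fin L) ℂ)
    (xc : Fin Nb → ℂ) (hxc : xc ≠ 0)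
    (hc1 : (fun i => X1 i 0) = xc) (hc2 : (fun i => X2 i 0) = xc)
    (hH1 : LinearIndependent ℂ H1ᵀ) (hH2 : LinearIndependent ℂ H2ᵀ)
    (hli : LinearIndependent ℂ
      (Sum.elim X1ᵀ (fun j : {j : Fin L // j ≠ 0} => X2ᵀ j.1)))
    (P1 P2 : Matrix (Fin Nb) (Fin Nb) ℂ)
    (hP1herm : P1ᴴ = P1) (hP2herm : P2ᴴ = P2)
    (hP1idem : P1 * P1 = P1) (hP2idem : P2 * P2 = P2)
    (hP1range : LinearMap.range P1.mulVecLin =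
      LinearMap.range ((H1 * X1ᵀ)ᵀ).mulVecLin)
    (hP2range : LinearMap.range P2.mulVecLin =
      LinearMap.range ((H2 * X2ᵀ)ᵀ).mulVecLin)
    (g : Fin Nb → ℂ) (hg : sqNorm g = 1)
    (hmax : ∀ g' : Fin Nb → ℂ, sqNorm g' = 1 →
      (star g' ⬝ᵥ (P1 + P2).mulVec g').re ≤ (star g ⬝ᵥ (P1 + P2).mulVec g).re) :
    ∃ (q1 q2 : Fin Nr → ℂ) (γ : ℂ),
      ((H1 * X1ᵀ)ᵀ).mulVec q1 = g ∧ ((H2 * X2ᵀ)ᵀ).mulVec q2 = g ∧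
      sqNorm (((H1 * X1ᵀ)ᵀ).mulVec q1 - g) +
        sqNorm (((H2 * X2ᵀ)ᵀ).mulVec q2 - g) = 0 ∧
      g = γ • xc := by
  have hcol1 : X1ᵀ 0 = xc := hc1
  have hcol2 : X2ᵀ 0 = xc := hc2
  have hr1 : LinearMap.range ((H1 * X1ᵀ)ᵀ).mulVecLin = LinearMap.range X1.mulVecLin :=
    range_view H1 X1 hH1
  have hr2 : LinearMap.range ((H2 * X2ᵀ)ᵀ).mulVecLin = LinearMap.range X2.mulVecLin :=
    range_view H2 X2 hH2
  -- xc is in both ranges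
  have hxcX1 : xc ∈ LinearMap.range X1.mulVecLin :=
    ⟨Pi.single 0 1, by rw [mulVecLin_apply, mulVec_single_one]; exact hcol1⟩
  have hxcX2 : xc ∈ LinearMap.range X2.mulVecLin :=
    ⟨Pi.single 0 1, by rw [mulVecLin_apply, mulVec_single_one]; exact hcol2⟩
  have hfix1 : P1.mulVec xc = xc :=
    fix_of_mem_range hP1idem (by rw [hP1range, hr1]; exact hxcX1)
  have hfix2 : P2.mulVec xc = xc :=
    fix_of_mem_range hP2idem (by rw [hP2range, hr2]; exact hxcX2)
  -- normalized candidate g0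
  set s : ℝ := sqNorm xc with hs_def
  have hs : 0 < s :=
    lt_of_le_of_ne (sqNorm_nonneg' xc) (fun h => hxc (sqNorm_eq_zero' h.symm))
  set c : ℂ := (((Real.sqrt s)⁻¹ : ℝ) : ℂ) with hc_def
  have hg0 : sqNorm (c • xc) = 1 := by
    rw [sqNorm_smul']
    have hnc : ‖c‖^2 = s⁻¹ := by
      rw [hc_def, Complex.norm_real, Real.norm_eq_abs,
        abs_of_nonneg (by positivity), inv_pow, Real.sq_sqrt hs.le]
    rw [hnc, ← hs_def, inv_mul_cancel₀ hs.ne']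
  have hPg01 : P1.mulVec (c • xc) = c • xc := by rw [mulVec_smul, hfix1]
  have hPg02 : P2.mulVec (c • xc) = c • xc := by rw [mulVec_smul, hfix2]
  -- the value at g0 is 2
  have hval : (star (c • xc) ⬝ᵥ (P1 + P2).mulVec (c • xc)).re = 2 := by
    rw [add_mulVec, hPg01, hPg02, dotProduct_add, Complex.add_re, sqNorm_eq_re, hg0]
    norm_num
  have h2le : (2:ℝ) ≤ (star g ⬝ᵥ (P1 + P2).mulVec g).re := by
    rw [← hval]; exact hmax _ hg0
  have hsplit : (star g ⬝ᵥ (P1 + P2).mulVec g).re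
      = (star g ⬝ᵥ P1.mulVec g).re + (star g ⬝ᵥ P2.mulVec g).re := by
    rw [add_mulVec, dotProduct_add, Complex.add_re]
  have hle1 := proj_re_le hP1herm hP1idem g hg
  have hle2 := proj_re_le hP2herm hP2idem g hg
  have hrone1 : (star g ⬝ᵥ P1.mulVec g).re = 1 := by rw [hsplit] at h2le; linarith
  have hrone2 : (star g ⬝ᵥ P2.mulVec g).re = 1 := by rw [hsplit] at h2le; linarith
  have hfixg1 : P1.mulVec g = g := proj_fix hP1herm hP1idem g hg hrone1
  have hfixg2 : P2.mulVec g = g := proj_fix hP2herm hP2idem g hg hrone2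
  have hgmem1 : g ∈ LinearMap.range ((H1 * X1ᵀ)ᵀ).mulVecLin := by
    rw [← hP1range]; exact ⟨g, hfixg1⟩
  have hgmem2 : g ∈ LinearMap.range ((H2 * X2ᵀ)ᵀ).mulVecLin := by
    rw [← hP2range]; exact ⟨g, hfixg2⟩
  obtain ⟨a, ha⟩ := hr1 ▸ hgmem1
  obtain ⟨b, hb⟩ := hr2 ▸ hgmem2
  obtain ⟨q1, hq1⟩ := hgmem1
  obtain ⟨q2, hq2⟩ := hgmem2
  rw [mulVecLin_apply] at hq1 hq2 ha hb
  -- show g is proportional to xc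
  set c0 : (Fin L ⊕ {j : Fin L // j ≠ 0}) → ℂ :=
    Sum.elim (fun j => a j - if j = 0 then b 0 else 0) (fun j => - b j.1) with hc0_def
  have hzero : ∑ v, c0 v • (Sum.elim X1ᵀ (fun j : {j : Fin L // j ≠ 0} => X2ᵀ j.1)) v = 0 := by
    rw [Fintype.sum_sum_type]
    change ∑ j : Fin L, c0 (Sum.inl j) • X1ᵀ j + ∑ j : {j : Fin L // j ≠ 0}, c0 (Sum.inr j) • X2ᵀ j.1 = 0
    have e1 : ∑ j : Fin L, c0 (Sum.inl j) • X1ᵀ j = g - b 0 • xc := by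
      simp only [hc0_def, Sum.elim_inl, sub_smul, ite_smul, zero_smul]
      rw [Finset.sum_sub_distrib, ← mulVec_sum', ha, Finset.sum_ite_eq', if_pos (Finset.mem_univ 0),
        hcol1]
    have esub : ∑ j : {j : Fin L // j ≠ 0}, b j.1 • X2ᵀ j.1
        = ∑ j ∈ Finset.univ.erase 0, b j • X2ᵀ j :=
      (Finset.sum_subtype (Finset.univ.erase 0)
        (fun j => by simp [Finset.mem_erase]) (fun j => b j • X2ᵀ j)).symm
    have e2 : ∑ j : {j : Fin L // j ≠ 0}, c0 (Sum.inr j) • X2ᵀ j.1 = -(g - b 0 • xc) := by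
      simp only [hc0_def, Sum.elim_inr, neg_smul]
      rw [Finset.sum_neg_distrib, esub, neg_eq_iff_eq_neg, neg_neg, eq_comm, sub_eq_iff_eq_add,
        ← hcol2, ← hb, mulVec_sum']
      exact (Finset.sum_erase_add Finset.univ _ (Finset.mem_univ (0 : Fin L))).symm
    rw [e1, e2, add_neg_cancel]
  have hcoef := Fintype.linearIndependent_iff.mp hli c0 hzero
  have haj : ∀ j : Fin L, j ≠ 0 → a j = 0 := by
    intro j hj
    have := hcoef (Sum.inl j)
    simpa [hc0_def, hj] using this
  have hgxc : g = a 0 • xc := by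
    rw [← ha, mulVec_sum', Finset.sum_eq_single 0 (fun j _ hj => by rw [haj j hj, zero_smul])
      (fun h => absurd (Finset.mem_univ 0) h), hcol1]
  refine ⟨q1, q2, a 0, hq1, hq2, ?_, hgxc⟩
  rw [hq1, hq2, sub_self]
  simp [sqNorm]
end
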